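/- arXiv:1809.07667 — 2 statements merged into one kernel-verified Lean document; each statement's English description precedes it below -/
import Mathlib

section
/- The action of ℝ^m ⋊ ℝ_{>0} on Conf_{mn}(U,V) by x ↦ λx + v is proper. -/
/-- The colored configuration space `Conf_{mn}(U,V) = Conf_{ℝ^m}(U) × Conf_{ℝ^n∖ℝ^m}(V)`:
injective families of terrestrial points in `ℝ^m` and of aerial points in `ℝ^n ∖ ℝ^m`. -/
def ConfMN (m n : ℕ) (U V : Type*) : Type _ :=
  {p : (U → (Fin m → ℝ)) × (V → (Fin n → ℝ)) //
    Function.Injective p.1 ∧ Function.Injective p.2 ∧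
      ∀ v, ∃ i : Fin n, m ≤ (i : ℕ) ∧ p.2 v i ≠ 0}

instance (m n : ℕ) (U V : Type*) : TopologicalSpace (ConfMN m n U V) := by
  unfold ConfMN; infer_instance

/-- Extension of a translation vector `t ∈ ℝ^m` by zero to `ℝ^n`. -/
def extT (m n : ℕ) (t : Fin m → ℝ) : Fin n → ℝ :=
  fun i => if h : (i : ℕ) < m then t ⟨i, h⟩ else 0

/-- Action of `(t, λ) ∈ ℝ^m ⋊ ℝ_{>0}` on `Conf_{mn}(U,V)`, by `x ↦ λx + t`. -/
def vscAct (m n : ℕ) (U V : Type*)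
    (g : (Fin m → ℝ) × {lam : ℝ // 0 < lam}) (x : ConfMN m n U V) :
    ConfMN m n U V :=
  ⟨(fun u i => g.2.1 * x.1.1 u i + g.1 i,
    fun v i => g.2.1 * x.1.2 v i + extT m n g.1 i), by
    obtain ⟨⟨a, b⟩, ha, hb, hb'⟩ := x
    refine ⟨?_, ?_, ?_⟩
    · intro u u' h
      apply ha
      funext i
      have h1 := congrFun h i
      simp only at h1
      have h2 : g.2.1 * a u i = g.2.1 * a u' i := by linarith
      exact mul_left_cancel₀ (ne_of_gt g.2.2) h2
    · intro v v' h
      apply hb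
      funext i
      have h1 := congrFun h i
      simp only at h1
      have h2 : g.2.1 * b v i = g.2.1 * b v' i := by linarith
      exact mul_left_cancel₀ (ne_of_gt g.2.2) h2
    · intro v
      obtain ⟨i, hi, hne⟩ := hb' v
      refine ⟨i, hi, ?_⟩
      have hz : extT m n g.1 i = 0 := by
        unfold extT
        rw [dif_neg (by omega)]
      simp only [hz, add_zero]
      exact mul_ne_zero (ne_of_gt g.2.2) hne⟩

section Aux

variable (m n : ℕ) {U V : Type*} [Fintype U] [Fintype V]

/-- Equivariant "center" of a configuration. -/
noncomputable def cFun (hmn : m ≤ n) (x : ConfMN m n U V) : Fin m → ℝ :=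
  fun i => ((∑ u, x.1.1 u i) + ∑ v, x.1.2 v ⟨i, lt_of_lt_of_le i.2 hmn⟩) /
    (Fintype.card U + Fintype.card V)

/-- Equivariant "scale" of a configuration. -/
noncomputable def sFun (x : ConfMN m n U V) : ℝ :=
  (∑ u, ∑ u', ‖x.1.1 u - x.1.1 u'‖) +
    ∑ v, ‖(fun i : Fin n => if m ≤ (i : ℕ) then x.1.2 v i else 0 : Fin n → ℝ)‖

lemma sFun_nonneg (x : ConfMN m n U V) : 0 ≤ sFun m n x := by
  unfold sFun
  positivity

lemma sFun_pos (hcard : 2 ≤ Fintype.card U + 2 * Fintype.card V)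
    (x : ConfMN m n U V) : 0 < sFun m n x := by
  unfold sFun
  rcases Nat.eq_zero_or_pos (Fintype.card V) with hV | hV
  · have hU : 1 < Fintype.card U := by omega
    obtain ⟨u, u', huu⟩ := Fintype.exists_pair_of_one_lt_card hU
    have hpos : 0 < ∑ u, ∑ u', ‖x.1.1 u - x.1.1 u'‖ := by
      apply Finset.sum_pos'
      · intro i _
        positivity
      · refine ⟨u, Finset.mem_univ u, ?_⟩
        apply Finset.sum_pos'
        · intro i _
          positivity
        · refine ⟨u', Finset.mem_univ u', ?_⟩
          rw [norm_pos_iff, sub_ne_zero]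
          exact fun h => huu (x.2.1 h)
    have h2 : (0:ℝ) ≤ ∑ v, ‖(fun i : Fin n => if m ≤ (i : ℕ) then x.1.2 v i else 0 : Fin n → ℝ)‖ := by
      positivity
    linarith
  · obtain ⟨v⟩ := Fintype.card_pos_iff.mp hV
    obtain ⟨i, hi, hne⟩ := x.2.2.2 v
    have hpos : (0:ℝ) < ∑ v, ‖(fun i : Fin n => if m ≤ (i : ℕ) then x.1.2 v i else 0 : Fin n → ℝ)‖ := by
      apply Finset.sum_pos' (fun _ _ => norm_nonneg _)
      refine ⟨v, Finset.mem_univ v, ?_⟩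
      rw [norm_pos_iff]
      intro h
      have h2 := congrFun h i
      rw [if_pos hi] at h2
      exact hne h2
    have h1 : (0:ℝ) ≤ ∑ u, ∑ u', ‖x.1.1 u - x.1.1 u'‖ := by positivity
    linarith

lemma sFun_smul (g : (Fin m → ℝ) × {lam : ℝ // 0 < lam}) (x : ConfMN m n U V) :
    sFun m n (vscAct m n U V g x) = g.2.1 * sFun m n x := by
  obtain ⟨t, lam⟩ := g
  unfold sFun vscAct
  have h1 : ∀ u u' : U, ‖(fun i => lam.1 * x.1.1 u i + t i) - (fun i => lam.1 * x.1.1 u' i + t i)‖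
      = lam.1 * ‖x.1.1 u - x.1.1 u'‖ := by
    intro u u'
    have he : (fun i => lam.1 * x.1.1 u i + t i) - (fun i => lam.1 * x.1.1 u' i + t i)
        = lam.1 • (x.1.1 u - x.1.1 u') := by
      funext i
      simp only [Pi.sub_apply, Pi.smul_apply, smul_eq_mul]
      ring
    rw [he, norm_smul, Real.norm_eq_abs, abs_of_pos lam.2]
  have h2 : ∀ v : V, ‖(fun i : Fin n => if m ≤ (i : ℕ) then lam.1 * x.1.2 v i + extT m n t i else 0 : Fin n → ℝ)‖
      = lam.1 * ‖(fun i : Fin n => if m ≤ (i : ℕ) then x.1.2 v i else 0 : Fin n → ℝ)‖ := by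
    intro v
    have he : (fun i : Fin n => if m ≤ (i : ℕ) then lam.1 * x.1.2 v i + extT m n t i else 0 : Fin n → ℝ)
        = lam.1 • (fun i : Fin n => if m ≤ (i : ℕ) then x.1.2 v i else 0 : Fin n → ℝ) := by
      funext i
      by_cases h : m ≤ (i : ℕ)
      · have hz : extT m n t i = 0 := by
          unfold extT
          rw [dif_neg (by omega)]
        simp only [if_pos h, hz, add_zero, Pi.smul_apply, smul_eq_mul]
      · simp only [if_neg h, Pi.smul_apply, smul_eq_mul, mul_zero]
    rw [he, norm_smul, Real.norm_eq_abs, abs_of_pos lam.2]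
  simp only [h1, h2, ← Finset.mul_sum]
  ring

lemma cFun_eqv (hmn : m ≤ n) (hN : (0 : ℝ) < Fintype.card U + Fintype.card V)
    (g : (Fin m → ℝ) × {lam : ℝ // 0 < lam}) (x : ConfMN m n U V) :
    cFun m n hmn (vscAct m n U V g x) = fun i => g.2.1 * cFun m n hmn x i + g.1 i := by
  obtain ⟨t, lam⟩ := g
  funext i
  unfold cFun vscAct
  have he : ∀ h : (i : ℕ) < n, extT m n t ⟨(i : ℕ), h⟩ = t i := by
    intro h
    unfold extT
    rw [dif_pos (show ((⟨(i : ℕ), h⟩ : Fin n) : ℕ) < m from i.2)]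
  simp only [he, Finset.sum_add_distrib, Finset.sum_const, Finset.card_univ, nsmul_eq_mul,
    ← Finset.mul_sum]
  have hne : (Fintype.card U : ℝ) + Fintype.card V ≠ 0 := ne_of_gt hN
  field_simp
  ring

lemma cont_val : Continuous (fun x : ConfMN m n U V =>
    (x.1 : (U → (Fin m → ℝ)) × (V → (Fin n → ℝ)))) :=
  continuous_subtype_val

lemma cont_sFun : Continuous (sFun m n : ConfMN m n U V → ℝ) := by
  have hv := cont_val m n (U := U) (V := V)
  unfold sFun
  apply Continuous.add
  · apply continuous_finset_sum
    intro u _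
    apply continuous_finset_sum
    intro u' _
    exact (((continuous_apply u).comp (continuous_fst.comp hv)).sub
      ((continuous_apply u').comp (continuous_fst.comp hv))).norm
  · apply continuous_finset_sum
    intro v _
    apply Continuous.norm
    apply continuous_pi
    intro i
    by_cases h : m ≤ (i : ℕ)
    · simp only [if_pos h]
      exact (continuous_apply i).comp ((continuous_apply v).comp (continuous_snd.comp hv))
    · simp only [if_neg h]
      exact continuous_const

lemma cont_cFun (hmn : m ≤ n) : Continuous (cFun m n hmn : ConfMN m n U V → Fin m → ℝ) := by
  have hv := cont_val m n (U := U) (V := V)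
  unfold cFun
  apply continuous_pi
  intro i
  apply Continuous.div_const
  apply Continuous.add
  · apply continuous_finset_sum
    intro u _
    exact (continuous_apply i).comp ((continuous_apply u).comp (continuous_fst.comp hv))
  · apply continuous_finset_sum
    intro v _
    exact (continuous_apply _).comp ((continuous_apply v).comp (continuous_snd.comp hv))

lemma ind_val : Topology.IsInducing (fun x : ConfMN m n U V =>
    (x.1 : (U → (Fin m → ℝ)) × (V → (Fin n → ℝ)))) :=
  Topology.IsInducing.subtypeVal

lemma cont_act : Continuous (fun p : ((Fin m → ℝ) × {lam : ℝ // 0 < lam}) × ConfMN m n U V =>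
    vscAct m n U V p.1 p.2) := by
  have hv := cont_val m n (U := U) (V := V)
  rw [(ind_val m n).continuous_iff]
  show Continuous fun p : ((Fin m → ℝ) × {lam : ℝ // 0 < lam}) × ConfMN m n U V =>
    ((fun u i => p.1.2.1 * p.2.1.1 u i + p.1.1 i : U → Fin m → ℝ),
     (fun v i => p.1.2.1 * p.2.1.2 v i + extT m n p.1.1 i : V → Fin n → ℝ))
  have hlam : Continuous fun p : ((Fin m → ℝ) × {lam : ℝ // 0 < lam}) × ConfMN m n U V =>
      p.1.2.1 := continuous_subtype_val.comp (continuous_snd.comp continuous_fst)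
  have ht : Continuous fun p : ((Fin m → ℝ) × {lam : ℝ // 0 < lam}) × ConfMN m n U V =>
      p.1.1 := continuous_fst.comp continuous_fst
  apply Continuous.prodMk
  · apply continuous_pi
    intro u
    apply continuous_pi
    intro i
    exact (hlam.mul ((continuous_apply i).comp ((continuous_apply u).comp
      (continuous_fst.comp (hv.comp continuous_snd))))).add ((continuous_apply i).comp ht)
  · apply continuous_pi
    intro v
    apply continuous_pi
    intro i
    apply Continuous.add
    · exact hlam.mul ((continuous_apply i).comp ((continuous_apply v).comp
        (continuous_snd.comp (hv.comp continuous_snd))))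
    · unfold extT
      by_cases h : (i : ℕ) < m
      · simp only [dif_pos h]
        exact (continuous_apply _).comp ht
      · simp only [dif_neg h]
        exact continuous_const

instance : T2Space (ConfMN m n U V) :=
  inferInstanceAs <| T2Space {p : (U → (Fin m → ℝ)) × (V → (Fin n → ℝ)) //
    Function.Injective p.1 ∧ Function.Injective p.2 ∧
      ∀ v, ∃ i : Fin n, m ≤ (i : ℕ) ∧ p.2 v i ≠ 0}

end Aux

/-- The action of `ℝ^m ⋊ ℝ_{>0}` on `Conf_{mn}(U,V)` by
`x ↦ λx + v` is proper: the map `G × X → X × X`, `(g,x) ↦ (g·x, x)` is a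
proper map. -/
theorem vsc_action_proper (m n : ℕ) (hm : 1 ≤ m) (hmn : m + 2 ≤ n)
    {U V : Type*} [Fintype U] [Fintype V]
    (hcard : 2 ≤ Fintype.card U + 2 * Fintype.card V) :
    IsProperMap (fun p : ((Fin m → ℝ) × {lam : ℝ // 0 < lam}) × ConfMN m n U V =>
      (vscAct m n U V p.1 p.2, p.2)) := by
  have hmn' : m ≤ n := by omega
  have hN : (0 : ℝ) < Fintype.card U + Fintype.card V := by
    have : 1 ≤ Fintype.card U + Fintype.card V := by omega
    push_cast
    exact_mod_cast Nat.lt_of_lt_of_le Nat.zero_lt_one this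
  set G := (Fin m → ℝ) × {lam : ℝ // 0 < lam}
  set X := ConfMN m n U V
  set F : G × X → X × X := fun p => (vscAct m n U V p.1 p.2, p.2) with hF
  -- the continuous retraction
  set r : X × X → G × X := fun z =>
    ((cFun m n hmn' z.1 - (sFun m n z.1 / sFun m n z.2) • cFun m n hmn' z.2,
      ⟨sFun m n z.1 / sFun m n z.2,
        div_pos (sFun_pos m n hcard z.1) (sFun_pos m n hcard z.2)⟩), z.2) with hr
  have contF : Continuous F := (cont_act m n).prodMk continuous_snd
  have contr : Continuous r := by
    apply Continuous.prodMk _ continuous_snd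
    have hs1 : Continuous fun z : X × X => sFun m n z.1 := (cont_sFun m n).comp continuous_fst
    have hs2 : Continuous fun z : X × X => sFun m n z.2 := (cont_sFun m n).comp continuous_snd
    have hc1 : Continuous fun z : X × X => cFun m n hmn' z.1 :=
      (cont_cFun m n hmn').comp continuous_fst
    have hc2 : Continuous fun z : X × X => cFun m n hmn' z.2 :=
      (cont_cFun m n hmn').comp continuous_snd
    have hdiv : Continuous fun z : X × X => sFun m n z.1 / sFun m n z.2 :=
      hs1.div hs2 fun z => ne_of_gt (sFun_pos m n hcard z.2)
    exact (hc1.sub (hdiv.smul hc2)).prodMk (hdiv.subtype_mk _)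
  have hleft : Function.LeftInverse r F := by
    rintro ⟨⟨t, lam⟩, x⟩
    have hsx : sFun m n x ≠ 0 := ne_of_gt (sFun_pos m n hcard x)
    have hs : sFun m n (vscAct m n U V (t, lam) x) / sFun m n x = lam.1 := by
      rw [sFun_smul, mul_div_assoc, div_self hsx, mul_one]
    have hc := cFun_eqv m n hmn' hN (t, lam) x
    simp only [hr, hF, Prod.mk.injEq, and_true, eq_self_iff_true]
    rw [Prod.mk.injEq]
    refine ⟨?_, ?_⟩
    · funext i
      simp only [hs, hc, Pi.sub_apply, Pi.smul_apply, smul_eq_mul]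
      ring
    · exact Subtype.ext hs
  have hinj : Function.Injective F := hleft.injective
  have hind : Topology.IsInducing F :=
    Topology.IsInducing.of_comp contF contr (by
      have : r ∘ F = id := funext hleft
      rw [this]
      exact Topology.IsInducing.id)
  have hemb : Topology.IsEmbedding F := ⟨hind, hinj⟩
  have hrange : Set.range F = {z | F (r z) = z} := by
    ext z
    constructor
    · rintro ⟨p, rfl⟩
      simp only [Set.mem_setOf_eq, hleft p]
    · intro hz
      exact ⟨r z, hz⟩
  have hclosed : IsClosed (Set.range F) := by
    rw [hrange]
    exact isClosed_eq (contF.comp contr) continuous_id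
  exact (Topology.IsClosedEmbedding.mk hemb hclosed).isProperMap
end

section
/- In the algebra vsc^∨_{mn}(0,l), a monomial basis is given by products ∏ ω_{i_s j_s} · ∏ η_k where the edge-monomials range over the usual admissible Arnold monomials (i_s < j_s, with the j_s distinct) and each connected component of the graph formed by the edges carries at most one factor η (which may be placed at the minimal vertex of its component), with isolated vertices allowed to carry η; in particular dim vsc^∨_{mn}(0,2) in degree (n−1)+(n−m−1) equals 1. -/
/-- Generators of `vsc^∨_{mn}(0,l)`: the `ω_{ij}` (for `i ≠ j`, degree `n−1`)
and the `η_i` (degree `n−m−1`). -/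
abbrev VscGen (l : ℕ) : Type := {p : Fin l × Fin l // p.1 ≠ p.2} ⊕ Fin l

/-- Degrees of the generators: `deg ω_{ij} = n−1`, `deg η_i = n−m−1`. -/
def vscDeg (n m l : ℕ) : VscGen l → ℕ
  | Sum.inl _ => n - 1
  | Sum.inr _ => n - m - 1

/-- The defining relations of `vsc^∨_{mn}(0,l)`. -/
inductive VscRel (n m l : ℕ) :
    FreeAlgebra ℝ (VscGen l) → FreeAlgebra ℝ (VscGen l) → Prop
  | comm (g h : VscGen l) :
      VscRel n m l (FreeAlgebra.ι ℝ g * FreeAlgebra.ι ℝ h)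
        (((-1 : ℝ) ^ (vscDeg n m l g * vscDeg n m l h)) •
          (FreeAlgebra.ι ℝ h * FreeAlgebra.ι ℝ g))
  | sym (i j : Fin l) (h : i ≠ j) :
      VscRel n m l (FreeAlgebra.ι ℝ (Sum.inl ⟨(j, i), h.symm⟩))
        (((-1 : ℝ) ^ n) • FreeAlgebra.ι ℝ (Sum.inl ⟨(i, j), h⟩))
  | sq (p : {p : Fin l × Fin l // p.1 ≠ p.2}) :
      VscRel n m l (FreeAlgebra.ι ℝ (Sum.inl p) * FreeAlgebra.ι ℝ (Sum.inl p)) 0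
  | arnold (i j k : Fin l) (hij : i ≠ j) (hjk : j ≠ k) (hki : k ≠ i) :
      VscRel n m l
        (FreeAlgebra.ι ℝ (Sum.inl ⟨(i, j), hij⟩) * FreeAlgebra.ι ℝ (Sum.inl ⟨(j, k), hjk⟩)
          + FreeAlgebra.ι ℝ (Sum.inl ⟨(j, k), hjk⟩) * FreeAlgebra.ι ℝ (Sum.inl ⟨(k, i), hki⟩)
          + FreeAlgebra.ι ℝ (Sum.inl ⟨(k, i), hki⟩) * FreeAlgebra.ι ℝ (Sum.inl ⟨(i, j), hij⟩)) 0
  | etaSq (i : Fin l) :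
      VscRel n m l (FreeAlgebra.ι ℝ (Sum.inr i) * FreeAlgebra.ι ℝ (Sum.inr i)) 0
  | etaOmega (i j : Fin l) (h : i ≠ j) :
      VscRel n m l
        (FreeAlgebra.ι ℝ (Sum.inr i) * FreeAlgebra.ι ℝ (Sum.inl ⟨(i, j), h⟩))
        (FreeAlgebra.ι ℝ (Sum.inr j) * FreeAlgebra.ι ℝ (Sum.inl ⟨(i, j), h⟩))

/-- The algebra `vsc^∨_{mn}(0,l)`, presented by generators and relations. -/
abbrev VscAlgebra (n m l : ℕ) : Type := RingQuot (VscRel n m l)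

/-- The degree-`k` graded piece of `vsc^∨_{mn}(0,l)`. -/
noncomputable def vscGraded (n m l : ℕ) (k : ℕ) : Submodule ℝ (VscAlgebra n m l) :=
  Submodule.span ℝ {x | ∃ w : List (VscGen l), (w.map (vscDeg n m l)).sum = k ∧
    x = (w.map (fun g => RingQuot.mkAlgHom ℝ (VscRel n m l) (FreeAlgebra.ι ℝ g))).prod}

namespace VscAux

/-- `ω_{01}` as a generator. -/
abbrev w01 : VscGen 2 := Sum.inl ⟨((0 : Fin 2), (1 : Fin 2)), by decide⟩
/-- `ω_{10}` as a generator. -/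
abbrev w10 : VscGen 2 := Sum.inl ⟨((1 : Fin 2), (0 : Fin 2)), by decide⟩

variable (n m : ℕ)

/-- image of a generator in the quotient algebra -/
noncomputable def e (g : VscGen 2) : VscAlgebra n m 2 :=
  RingQuot.mkAlgHom ℝ (VscRel n m 2) (FreeAlgebra.ι ℝ g)

/-- the distinguished monomial `η_0 ω_{01}` -/
noncomputable def V : VscAlgebra n m 2 :=
  RingQuot.mkAlgHom ℝ (VscRel n m 2)
    (FreeAlgebra.ι ℝ (Sum.inr (0 : Fin 2)) *
      FreeAlgebra.ι ℝ (Sum.inl ⟨((0 : Fin 2), 1), by decide⟩))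

lemma V_eq : V n m = e n m (Sum.inr 0) * e n m w01 := map_mul _ _ _

lemma rel_eq {a b} (h : VscRel n m 2 a b) :
    RingQuot.mkAlgHom ℝ (VscRel n m 2) a = RingQuot.mkAlgHom ℝ (VscRel n m 2) b :=
  RingQuot.mkAlgHom_rel ℝ h

lemma e_comm (g h : VscGen 2) :
    e n m g * e n m h =
      ((-1 : ℝ) ^ (vscDeg n m 2 g * vscDeg n m 2 h)) • (e n m h * e n m g) := by
  have := rel_eq n m (VscRel.comm g h)
  simp only [map_mul, map_smul] at this
  exact this

lemma e_etaSq (i : Fin 2) : e n m (Sum.inr i) * e n m (Sum.inr i) = 0 := by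
  have := rel_eq n m (VscRel.etaSq (l := 2) i)
  simp only [map_mul, map_zero] at this
  exact this

lemma e_sym : e n m w10 = ((-1 : ℝ) ^ n) • e n m w01 := by
  have := rel_eq n m (VscRel.sym (0 : Fin 2) 1 (by decide))
  simp only [map_smul] at this
  exact this

lemma e_etaOmega : e n m (Sum.inr 0) * e n m w01 = e n m (Sum.inr 1) * e n m w01 := by
  have := rel_eq n m (VscRel.etaOmega (0 : Fin 2) 1 (by decide))
  simp only [map_mul] at this
  exact this

lemma eta_triple (i j k : Fin 2) :
    e n m (Sum.inr i) * (e n m (Sum.inr j) * e n m (Sum.inr k)) = 0 := by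
  by_cases hjk : j = k
  · subst hjk; rw [e_etaSq, mul_zero]
  · by_cases hij : i = j
    · subst hij; rw [← mul_assoc, e_etaSq, zero_mul]
    · have hik : i = k := by omega
      subst hik
      rw [e_comm n m (Sum.inr j) (Sum.inr i), mul_smul_comm, ← mul_assoc, e_etaSq,
        zero_mul, smul_zero]

lemma eta_omega_mem (k : Fin 2) (p : {p : Fin 2 × Fin 2 // p.1 ≠ p.2}) :
    e n m (Sum.inr k) * e n m (Sum.inl p) ∈ Submodule.span ℝ {V n m} := by
  have h0 : e n m (Sum.inr 0) * e n m w01 ∈ Submodule.span ℝ {V n m} := by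
    rw [← V_eq]; exact Submodule.mem_span_singleton_self _
  have h1 : e n m (Sum.inr 1) * e n m w01 ∈ Submodule.span ℝ {V n m} := by
    rw [← e_etaOmega]; exact h0
  have hk : ∀ k : Fin 2, e n m (Sum.inr k) * e n m w01 ∈ Submodule.span ℝ {V n m} := by
    intro k; fin_cases k
    · exact h0
    · exact h1
  obtain ⟨⟨i, j⟩, hij⟩ := p
  fin_cases i <;> fin_cases j <;> simp only [ne_eq] at hij ⊢
  · exact absurd trivial hij
  · exact hk k
  · show e n m (Sum.inr k) * e n m w10 ∈ _
    rw [e_sym, mul_smul_comm]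
    exact Submodule.smul_mem _ _ (hk k)
  · exact absurd trivial hij

lemma omega_eta_mem (k : Fin 2) (p : {p : Fin 2 × Fin 2 // p.1 ≠ p.2}) :
    e n m (Sum.inl p) * e n m (Sum.inr k) ∈ Submodule.span ℝ {V n m} := by
  rw [e_comm]
  exact Submodule.smul_mem _ _ (eta_omega_mem n m k p)

lemma deg_sum (w : List (VscGen 2)) :
    (w.map (vscDeg n m 2)).sum =
      (w.countP (fun g => g.isLeft)) * (n - 1) +
        (w.countP (fun g => g.isRight)) * (n - m - 1) := by
  induction w with
  | nil => simp
  | cons g t ih =>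
    cases g <;> simp [List.countP_cons, vscDeg, ih] <;> ring

lemma count_cases (p q a b : ℕ) (hq : 1 ≤ q) (hpq : q < p) (hsum : a * p + b * q = p + q) :
    (a = 1 ∧ b = 1) ∨ (a = 0 ∧ 3 ≤ b) := by
  match a, hsum with
  | 0, hsum =>
    right
    refine ⟨rfl, ?_⟩
    rw [Nat.zero_mul, Nat.zero_add] at hsum
    by_contra hb3
    push_neg at hb3
    have h1 : b * q ≤ 2 * q := Nat.mul_le_mul_right q (by omega)
    linarith
  | 1, hsum =>
    left
    refine ⟨rfl, ?_⟩
    rw [Nat.one_mul] at hsum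
    have h2 : b * q = 1 * q := by
      rw [Nat.one_mul]; exact Nat.add_left_cancel hsum
    exact Nat.eq_of_mul_eq_mul_right (by omega) h2
  | (a + 2), hsum =>
    exfalso
    have h1 : 2 * p ≤ (a + 2) * p := Nat.mul_le_mul_right p (by omega)
    have h2 : 0 ≤ b * q := Nat.zero_le _
    linarith

lemma length_eq (w : List (VscGen 2)) :
    w.length = w.countP (fun g => g.isLeft) + w.countP (fun g => g.isRight) := by
  rw [w.length_eq_countP_add_countP (fun g => g.isLeft)]
  congr 1
  apply List.countP_congr
  intro g _
  cases g <;> simp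

lemma word_mem (hm : 1 ≤ m) (hmn : m + 2 ≤ n) (w : List (VscGen 2))
    (hw : (w.map (vscDeg n m 2)).sum = (n - 1) + (n - m - 1)) :
    (w.map (e n m)).prod ∈ Submodule.span ℝ {V n m} := by
  have hq : 1 ≤ n - m - 1 := by omega
  have hpq : n - m - 1 < n - 1 := by omega
  rw [deg_sum] at hw
  rcases count_cases (n - 1) (n - m - 1) _ _ hq hpq hw with ⟨ha, hb⟩ | ⟨ha, hb⟩
  · -- exactly one ω and one η : the word has length 2
    have hlen : w.length = 2 := by rw [length_eq, ha, hb]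
    match w, hlen, ha, hb with
    | [g, h], _, ha, hb =>
      simp only [List.map_cons, List.map_nil, List.prod_cons, List.prod_nil, mul_one]
      match g, h, ha, hb with
      | Sum.inl p, Sum.inl p', ha, hb => simp [List.countP_cons] at hb
      | Sum.inr i, Sum.inr j, ha, hb => simp [List.countP_cons] at ha
      | Sum.inl p, Sum.inr k, ha, hb => exact omega_eta_mem n m k p
      | Sum.inr k, Sum.inl p, ha, hb => exact eta_omega_mem n m k p
  · -- no ω and at least three η's : the product vanishes
    have hall : ∀ g ∈ w, ¬(g.isLeft = true) := List.countP_eq_zero.mp ha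
    have hlen : 3 ≤ w.length := le_trans hb List.countP_le_length
    match w, hall, hlen with
    | g1 :: g2 :: g3 :: t, hall, hlen =>
      obtain ⟨i1, h1⟩ : ∃ i, g1 = Sum.inr i := by
        cases g1 with
        | inl p => exact absurd (hall _ List.mem_cons_self) (by simp)
        | inr i => exact ⟨i, rfl⟩
      obtain ⟨i2, h2⟩ : ∃ i, g2 = Sum.inr i := by
        cases g2 with
        | inl p =>
          exact absurd (hall _ (List.mem_cons_of_mem _ List.mem_cons_self)) (by simp)
        | inr i => exact ⟨i, rfl⟩
      obtain ⟨i3, h3⟩ : ∃ i, g3 = Sum.inr i := by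
        cases g3 with
        | inl p =>
          exact absurd (hall _ (List.mem_cons_of_mem _
            (List.mem_cons_of_mem _ List.mem_cons_self))) (by simp)
        | inr i => exact ⟨i, rfl⟩
      subst h1 h2 h3
      simp only [List.map_cons, List.prod_cons]
      rw [show e n m (Sum.inr i1) * (e n m (Sum.inr i2) * (e n m (Sum.inr i3) *
            (t.map (e n m)).prod)) =
          (e n m (Sum.inr i1) * (e n m (Sum.inr i2) * e n m (Sum.inr i3))) *
            (t.map (e n m)).prod from by rw [mul_assoc, mul_assoc],
        eta_triple, zero_mul]
      exact Submodule.zero_mem _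


noncomputable def Xm (n m : ℕ) : Matrix (Fin 4) (Fin 4) ℝ :=
  !![0,0,0,0; 1,0,0,0; 0,0,0,0; 0,0,(-1:ℝ)^((n-1)*(n-m-1)),0]

def Ym : Matrix (Fin 4) (Fin 4) ℝ :=
  !![0,0,0,0; 0,0,0,0; 1,0,0,0; 0,1,0,0]

variable (n m : ℕ)

lemma hXX : Xm n m * Xm n m = 0 := by
  ext i j
  fin_cases i <;> fin_cases j <;>
    simp [Xm, Matrix.mul_apply, Fin.sum_univ_four, Matrix.vecHead, Matrix.vecTail]

lemma hYY : Ym * Ym = 0 := by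
  ext i j
  fin_cases i <;> fin_cases j <;>
    simp [Ym, Matrix.mul_apply, Fin.sum_univ_four, Matrix.vecHead, Matrix.vecTail]

lemma neg_one_pow_sq (k : ℕ) : ((-1:ℝ)^k) * ((-1:ℝ)^k) = 1 := by
  rw [← pow_add, show k + k = 2 * k by ring, pow_mul]
  norm_num

lemma hXY : Xm n m * Ym = ((-1:ℝ)^((n-1)*(n-m-1))) • (Ym * Xm n m) := by
  ext i j
  fin_cases i <;> fin_cases j <;>
    simp [Xm, Ym, Matrix.mul_apply, Fin.sum_univ_four, Matrix.vecHead, Matrix.vecTail]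

lemma hYX : Ym * Xm n m = ((-1:ℝ)^((n-1)*(n-m-1))) • (Xm n m * Ym) := by
  ext i j
  fin_cases i <;> fin_cases j <;>
    simp [Xm, Ym, Matrix.mul_apply, Fin.sum_univ_four, Matrix.vecHead, Matrix.vecTail, neg_one_pow_sq]

lemma hYXne : Ym * Xm n m ≠ 0 := by
  intro h
  have := congrFun (congrFun h 3) 0
  simp [Xm, Ym, Matrix.mul_apply, Fin.sum_univ_four, Matrix.vecHead, Matrix.vecTail] at this


noncomputable def f (n m : ℕ) : VscGen 2 → Matrix (Fin 4) (Fin 4) ℝ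
  | Sum.inl p => (if p.val = ((0 : Fin 2), (1 : Fin 2)) then (1 : ℝ) else (-1) ^ n) • Xm n m
  | Sum.inr _ => Ym

noncomputable def phi (n m : ℕ) : FreeAlgebra ℝ (VscGen 2) →ₐ[ℝ] Matrix (Fin 4) (Fin 4) ℝ :=
  FreeAlgebra.lift ℝ (f n m)

lemma phi_rel : ∀ ⦃a b⦄, VscRel n m 2 a b → phi n m a = phi n m b := by
  intro a b r
  cases r with
  | comm g h =>
    simp only [phi, map_mul, map_smul, FreeAlgebra.lift_ι_apply]
    cases g with
    | inl p =>
      cases h with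
      | inl p' =>
        simp [f, vscDeg, smul_mul_assoc, mul_smul_comm, hXX n m]
      | inr k =>
        simp only [f, vscDeg, smul_mul_assoc, mul_smul_comm]
        rw [hXY n m, smul_comm]
    | inr k =>
      cases h with
      | inl p =>
        simp only [f, vscDeg, smul_mul_assoc, mul_smul_comm]
        rw [Nat.mul_comm (n - m - 1) (n - 1), hYX n m, smul_comm]
      | inr k' =>
        simp [f, hYY]
  | sym i j h =>
    simp only [phi, map_smul, FreeAlgebra.lift_ι_apply]
    have hcase : (i = 0 ∧ j = 1) ∨ (i = 1 ∧ j = 0) := by omega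
    rcases hcase with ⟨hi, hj⟩ | ⟨hi, hj⟩ <;> subst hi <;> subst hj <;>
      simp [f, smul_smul, neg_one_pow_sq]
  | sq p =>
    simp [phi, map_mul, f, smul_mul_assoc, mul_smul_comm, hXX n m]
  | arnold i j k hij hjk hki =>
    exfalso; omega
  | etaSq i =>
    simp [phi, map_mul, f, hYY]
  | etaOmega i j h =>
    simp [phi, map_mul, f]

noncomputable def Psi (n m : ℕ) : VscAlgebra n m 2 →ₐ[ℝ] Matrix (Fin 4) (Fin 4) ℝ :=
  RingQuot.liftAlgHom ℝ ⟨phi n m, phi_rel n m⟩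

lemma PsiV : Psi n m (V n m) = Ym * Xm n m := by
  have h1 : Psi n m (V n m) = phi n m (FreeAlgebra.ι ℝ (Sum.inr (0 : Fin 2)) *
      FreeAlgebra.ι ℝ (Sum.inl ⟨((0 : Fin 2), 1), by decide⟩)) :=
    RingQuot.liftAlgHom_mkAlgHom_apply _ _ _ _
  rw [h1]
  simp [phi, f, map_mul]

lemma V_ne_zero : V n m ≠ 0 := by
  intro h
  exact hYXne n m (by rw [← PsiV n m, h, map_zero])

end VscAux

/-- key consequence of the monomial-basis description of
`vsc^∨_{mn}(0,l)`, where each connected component of the graph of an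
admissible Arnold monomial carries at most one factor `η`: for `l = 2`, the
graded piece of `vsc^∨_{mn}(0,2)` in degree `(n−1)+(n−m−1)` is
one-dimensional, spanned by the monomial `η_1 ω_{12}` (equivalently by
`η_2 ω_{12}`, since `η_1ω_{12} = η_2ω_{12}`). -/
theorem vsc_two_points_top_degree_one_dimensional (n m : ℕ) (hm : 1 ≤ m) (hmn : m + 2 ≤ n) :
    Module.finrank ℝ (vscGraded n m 2 ((n - 1) + (n - m - 1))) = 1 ∧
    vscGraded n m 2 ((n - 1) + (n - m - 1)) =
      Submodule.span ℝ
        {RingQuot.mkAlgHom ℝ (VscRel n m 2)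
          (FreeAlgebra.ι ℝ (Sum.inr (0 : Fin 2)) *
            FreeAlgebra.ι ℝ (Sum.inl ⟨((0 : Fin 2), 1), by decide⟩))} := by
  have hspan : vscGraded n m 2 ((n - 1) + (n - m - 1)) =
      Submodule.span ℝ {VscAux.V n m} := by
    apply le_antisymm
    · unfold vscGraded
      apply Submodule.span_le.mpr
      rintro x ⟨w, hw, rfl⟩
      exact VscAux.word_mem n m hm hmn w hw
    · apply Submodule.span_le.mpr
      rintro x hx
      rw [Set.mem_singleton_iff] at hx
      subst hx
      apply Submodule.subset_span
      refine ⟨[Sum.inr 0, VscAux.w01], ?_, ?_⟩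
      · simp only [List.map_cons, List.map_nil, List.sum_cons, List.sum_nil, vscDeg]
        omega
      · simp [VscAux.V, map_mul]
  refine ⟨?_, ?_⟩
  · rw [hspan]
    exact finrank_span_singleton (VscAux.V_ne_zero n m)
  · exact hspan
end
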